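/- Let S be a numerical semigroup of genus g with weight W ≤ 2g − 1. Then for every n ≥ 3, ∑_{i=1}^n (m_i − i) − 1 ≥ (n − 2)g, where m_i is the i-th smallest positive element of S. -/

import Mathlib

/-- If a numerical semigroup `S` of genus `g` has weight
`W ≤ 2g - 1`, then for every `n ≥ 3`,
`∑_{i=1}^n (m_i - i) - 1 ≥ (n-2) g`. -/
theorem stmt_4 (S : Set ℕ) (h0 : (0 : ℕ) ∈ S)
    (hadd : ∀ a b : ℕ, a ∈ S → b ∈ S → a + b ∈ S)
    (hfin : Sᶜ.Finite) (g : ℕ) (hg : Sᶜ.ncard = g)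
    (W : ℤ) (hW : W = (∑ ℓ ∈ hfin.toFinset, (ℓ : ℤ)) - g * (g + 1) / 2)
    (hWbound : W ≤ 2 * g - 1) :
    ∀ n : ℕ, 3 ≤ n →
      (n - 2 : ℤ) * g ≤
        (∑ i ∈ Finset.Icc 1 n,
          ((Nat.nth (fun m => m ∈ S ∧ 0 < m) (i - 1) : ℤ) - (i : ℤ))) - 1 := by
  classical
  intro n hn
  set P : ℕ → Prop := fun m => m ∈ S ∧ 0 < m with hP
  set G : Finset ℕ := hfin.toFinset with hGdef
  have hGcard : G.card = g := by
    rw [hGdef, ← Set.ncard_eq_toFinset_card _ hfin, hg]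
  have hGmem : ∀ x, x ∈ G ↔ x ∉ S := by
    intro x; simp [hGdef, Set.Finite.mem_toFinset]
  have h0G : (0 : ℕ) ∉ G := by simp [hGmem, h0]
  -- P is infinite
  have hPinf : (setOf P).Infinite := by
    apply Set.infinite_of_finite_compl
    have hsub : (setOf P)ᶜ ⊆ Sᶜ ∪ {0} := by
      intro x hx
      simp only [Set.mem_compl_iff, Set.mem_setOf_eq, hP, not_and_or, not_lt,
        Nat.le_zero] at hx
      change ¬ (x ∈ S ∧ 0 < x) at hx
      rw [not_and_or, not_lt, Nat.le_zero] at hx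
      rcases hx with h | h
      · exact Or.inl h
      · exact Or.inr (by simp [h])
    exact Set.Finite.subset (hfin.union (Set.finite_singleton 0)) hsub
  have hfilt : ∀ m : ℕ, 0 < m →
      (Finset.range m).filter (fun x => ¬ P x) = insert 0 (G.filter (· < m)) := by
    intro m hm
    ext x
    simp only [Finset.mem_filter, Finset.mem_range, Finset.mem_insert, hP, not_and_or,
      not_lt, Nat.le_zero, hGmem]
    constructor
    · rintro ⟨hx, h | h⟩
      · exact Or.inr ⟨h, hx⟩
      · exact Or.inl h
    · rintro (rfl | ⟨h1, h2⟩)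
      · exact ⟨hm, Or.inr rfl⟩
      · exact ⟨h2, Or.inl h1⟩
  -- Lemma A: nth P k = k + 1 + #(gaps < nth P k)
  have hA : ∀ k : ℕ, Nat.nth P k = k + 1 + (G.filter (· < Nat.nth P k)).card := by
    intro k
    have hpos : 0 < Nat.nth P k := (Nat.nth_mem_of_infinite hPinf k).2
    have hc : Nat.count P (Nat.nth P k) = k := Nat.count_nth_of_infinite hPinf k
    have h1 := Finset.card_filter_add_card_filter_not (s := Finset.range (Nat.nth P k)) P
    rw [hfilt _ hpos, Finset.card_insert_of_notMem (by simp [h0G]),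
      Finset.card_range, ← Nat.count_eq_card_filter_range] at h1
    have h2 : Nat.count P (Nat.nth P k) + ((G.filter (· < Nat.nth P k)).card + 1)
        = Nat.nth P k := h1
    omega
  -- count P (ℓ+1) = ℓ - #(gaps ≤ ℓ)
  have hcount : ∀ ℓ : ℕ, Nat.count P (ℓ + 1) + 1 + (G.filter (· ≤ ℓ)).card = ℓ + 1 := by
    intro ℓ
    have h1 := Finset.card_filter_add_card_filter_not (s := Finset.range (ℓ + 1)) P
    rw [hfilt (ℓ + 1) (Nat.succ_pos ℓ), Finset.card_insert_of_notMem (by simp [h0G]),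
      Finset.card_range, ← Nat.count_eq_card_filter_range] at h1
    have he : (G.filter (· < ℓ + 1)) = G.filter (· ≤ ℓ) := by
      apply Finset.filter_congr; intro x _; simp [Nat.lt_succ_iff]
    rw [he] at h1
    have h2 : Nat.count P (ℓ + 1) + ((G.filter (· ≤ ℓ)).card + 1) = ℓ + 1 := h1
    omega
  -- per-gap lower bound
  have hpergap : ∀ ℓ ∈ G,
      (n : ℤ) - ℓ + (G.filter (· ≤ ℓ)).card
        ≤ (((Finset.range n).filter (fun k => ℓ < Nat.nth P k)).card : ℤ) := by
    intro ℓ hℓ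
    have hsplit : ((Finset.range n).filter (fun k => ℓ < Nat.nth P k)).card
        + ((Finset.range n).filter (fun k => ¬ ℓ < Nat.nth P k)).card = n := by
      have h1 := Finset.card_filter_add_card_filter_not
        (s := Finset.range n) (fun k => ℓ < Nat.nth P k)
      rwa [Finset.card_range] at h1
    have hle : ((Finset.range n).filter (fun k => ¬ ℓ < Nat.nth P k)).card
        ≤ Nat.count P (ℓ + 1) := by
      rw [Nat.count_eq_card_filter_range]
      apply Finset.card_le_card_of_injOn (Nat.nth P)
      · intro k hk
        simp only [Finset.mem_coe, Finset.mem_filter, Finset.mem_range, not_lt] at hk ⊢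
        exact ⟨Nat.lt_succ_of_le hk.2, Nat.nth_mem_of_infinite hPinf k⟩
      · exact Set.InjOn.mono (Set.subset_univ _) ((Nat.nth_injective hPinf).injOn)
    have hcℓ := hcount ℓ
    push_cast
    omega
  -- double counting (in ℕ)
  have hdcN : ∑ k ∈ Finset.range n, (G.filter (· < Nat.nth P k)).card
      = ∑ ℓ ∈ G, ((Finset.range n).filter (fun k => ℓ < Nat.nth P k)).card := by
    simp_rw [Finset.card_filter]
    exact Finset.sum_comm
  have hdc : ∑ k ∈ Finset.range n, ((G.filter (· < Nat.nth P k)).card : ℤ)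
      = ∑ ℓ ∈ G, (((Finset.range n).filter (fun k => ℓ < Nat.nth P k)).card : ℤ) := by
    exact_mod_cast hdcN
  -- sum of A_ℓ over gaps
  have hSA : 2 * ∑ ℓ ∈ G, (G.filter (· ≤ ℓ)).card = g * (g + 1) := by
    have hsym : ∑ ℓ ∈ G, (G.filter (· ≤ ℓ)).card
        = ∑ ℓ ∈ G, (G.filter (fun x => ℓ ≤ x)).card := by
      simp_rw [Finset.card_filter]
      exact Finset.sum_comm
    have hAB : ∀ ℓ ∈ G, (G.filter (· ≤ ℓ)).card + (G.filter (fun x => ℓ ≤ x)).card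
        = g + 1 := by
      intro ℓ hℓ
      have h1 : G.filter (fun x => ℓ ≤ x) = insert ℓ (G.filter (fun x => ¬ x ≤ ℓ)) := by
        ext x
        simp only [Finset.mem_filter, Finset.mem_insert, not_le]
        constructor
        · rintro ⟨hx, h⟩
          rcases eq_or_lt_of_le h with h' | h'
          · exact Or.inl h'.symm
          · exact Or.inr ⟨hx, h'⟩
        · rintro (rfl | ⟨hx, h⟩)
          · exact ⟨hℓ, le_refl _⟩
          · exact ⟨hx, le_of_lt h⟩
      rw [h1, Finset.card_insert_of_notMem (by simp)]
      have h2 : (G.filter (fun x => x ≤ ℓ)).card + (G.filter (fun x => ¬ x ≤ ℓ)).card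
          = G.card := Finset.card_filter_add_card_filter_not (fun x => x ≤ ℓ)
      omega
    have hsum := Finset.sum_congr rfl hAB
    rw [Finset.sum_add_distrib, ← hsym, Finset.sum_const, hGcard, smul_eq_mul] at hsum
    omega
  -- main chain
  have hmain : (n : ℤ) * g - (∑ ℓ ∈ G, (ℓ : ℤ)) + (∑ ℓ ∈ G, ((G.filter (· ≤ ℓ)).card : ℤ))
      ≤ ∑ k ∈ Finset.range n, ((G.filter (· < Nat.nth P k)).card : ℤ) := by
    rw [hdc]
    calc (n : ℤ) * g - (∑ ℓ ∈ G, (ℓ : ℤ)) + (∑ ℓ ∈ G, ((G.filter (· ≤ ℓ)).card : ℤ))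
        = ∑ ℓ ∈ G, ((n : ℤ) - ℓ + (G.filter (· ≤ ℓ)).card) := by
          rw [Finset.sum_add_distrib, Finset.sum_sub_distrib, Finset.sum_const, hGcard]
          push_cast [nsmul_eq_mul]
          ring
      _ ≤ _ := Finset.sum_le_sum hpergap
  -- rewrite the goal sum
  have hsum_eq : (∑ i ∈ Finset.Icc 1 n, ((Nat.nth P (i - 1) : ℤ) - (i : ℤ)))
      = ∑ k ∈ Finset.range n, ((G.filter (· < Nat.nth P k)).card : ℤ) := by
    rw [← Finset.Ico_add_one_right_eq_Icc, Finset.sum_Ico_eq_sum_range]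
    have hr : n + 1 - 1 = n := rfl
    rw [hr]
    apply Finset.sum_congr rfl
    intro k _
    have h1 : (1 + k) - 1 = k := by omega
    rw [h1]
    have h2 := hA k
    push_cast
    omega
  rw [hsum_eq]
  have hSAN : (∑ ℓ ∈ G, (G.filter (· ≤ ℓ)).card) * 2 = g * (g + 1) := by omega
  have hS2 : (∑ ℓ ∈ G, ((G.filter (· ≤ ℓ)).card : ℤ)) * 2 = (g : ℤ) * (g + 1) := by
    exact_mod_cast hSAN
  have hdiv : ((g : ℤ) * ((g : ℤ) + 1)) / 2 = ∑ ℓ ∈ G, ((G.filter (· ≤ ℓ)).card : ℤ) := by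
    omega
  rw [hW, hdiv] at hWbound
  have hn' : (3 : ℤ) ≤ (n : ℤ) := by exact_mod_cast hn
  linarith
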